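/- Let I be an index set, d ≥ 1, and α : I → ℝ^d a map. Then for any finite sequences 𝐣 = (j_1,…,j_p) and 𝐤 = (k_1,…,k_q) in I, the convolution of measures on ℝ^d satisfies D_𝐣 * D_𝐤 = ∑_{𝐢 ∈ 𝐣 ⧢ 𝐤} D_𝐢, where the sum runs over the multiset 𝐣 ⧢ 𝐤 of the (p+q choose p) shuffles of 𝐣 and 𝐤 (counted with multiplicity, indexed by Sh(p,q)), and the convolution μ * ν is the pushforward of the product measure μ × ν under the addition map ℝ^d × ℝ^d → ℝ^d. -/

import Mathlib

open MeasureTheory Finset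

/-- Lebesgue measure `δ_{Δ^p}` on the standard `p`-simplex
`Δ^p = {c ∈ ℝ_{≥0}^{p+1} : c_0 + ⋯ + c_p = 1}`, realized as the pushforward of
`p`-dimensional Lebesgue measure on `{c ∈ ℝ_{≥0}^p : ∑ c_k ≤ 1}` under
`(c_1, …, c_p) ↦ (1 − ∑ c_k, c_1, …, c_p)`. -/
noncomputable def simplexMeasure (p : ℕ) : Measure (Fin (p + 1) → ℝ) :=
  Measure.map (fun c : Fin p → ℝ => Fin.cons (1 - ∑ k, c k) c)
    (volume.restrict {c : Fin p → ℝ | (∀ k, 0 ≤ c k) ∧ ∑ k, c k ≤ 1})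

/-- The partial sums `β^𝐢_k = α_{i_1} + ⋯ + α_{i_k}` (with `β^𝐢_0 = 0`). -/
noncomputable def beta {I : Type*} {d : ℕ} (α : I → Fin d → ℝ) {p : ℕ}
    (i : Fin p → I) (k : Fin (p + 1)) : Fin d → ℝ :=
  ∑ j ∈ Finset.univ.filter (fun j : Fin p => (j : ℕ) < (k : ℕ)), α (i j)

/-- The measure `D_𝐢 = (π_𝐢)_* δ_{Δ^p}` on `ℝ^d`, where
`π_𝐢(c_0, …, c_p) = −∑_k c_k β^𝐢_k`. -/
noncomputable def Dmeas {I : Type*} {d : ℕ} (α : I → Fin d → ℝ) {p : ℕ}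
    (i : Fin p → I) : Measure (Fin d → ℝ) :=
  Measure.map (fun c : Fin (p + 1) → ℝ => -∑ k : Fin (p + 1), c k • beta α i k)
    (simplexMeasure p)

/-- `Sh(p,q)`: permutations of `{1, …, p+q}` increasing on the first `p`
and on the last `q` indices; they index the shuffles of two sequences of
lengths `p` and `q`. -/
def Sh (p q : ℕ) : Finset (Equiv.Perm (Fin (p + q))) :=
  Finset.univ.filter (fun σ =>
    (∀ i j : Fin (p + q), i < j → (j : ℕ) < p → σ i < σ j) ∧
    (∀ i j : Fin (p + q), i < j → p ≤ (i : ℕ) → σ i < σ j))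

namespace SP
variable {d : ℕ}

/-- the pushforward target function -/
def ff {d n : ℕ} (b : Fin n → Fin d → ℝ) : (Fin n → ℝ) → (Fin d → ℝ) :=
  fun s => -∑ m, s m • b m

lemma ff_cont {d n : ℕ} (b : Fin n → Fin d → ℝ) : Continuous (ff b) := by
  unfold ff
  exact (continuous_finset_sum _ fun m _ => (continuous_apply m).smul continuous_const).neg

lemma ff_meas {d n : ℕ} (b : Fin n → Fin d → ℝ) : Measurable (ff b) := (ff_cont b).measurable

/-- ordered simplex -/
def Tset (n : ℕ) : Set (Fin n → ℝ) :=
  {s | (∀ m l : Fin n, m ≤ l → s l ≤ s m) ∧ ∀ m, 0 ≤ s m ∧ s m ≤ 1}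

lemma Tset_meas (n : ℕ) : MeasurableSet (Tset n) := by
  have : Tset n = (⋂ (m : Fin n) (l : Fin n) (_ : m ≤ l), {s : Fin n → ℝ | s l ≤ s m}) ∩
      ((⋂ m : Fin n, {s : Fin n → ℝ | 0 ≤ s m}) ∩ ⋂ m : Fin n, {s : Fin n → ℝ | s m ≤ 1}) := by
    ext s
    simp only [Tset, Set.mem_setOf_eq, Set.mem_inter_iff, Set.mem_iInter]
    exact ⟨fun ⟨h1,h2⟩ => ⟨h1, fun m => (h2 m).1, fun m => (h2 m).2⟩,
      fun ⟨h1,h2,h3⟩ => ⟨h1, fun m => ⟨h2 m, h3 m⟩⟩⟩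
  rw [this]
  refine MeasurableSet.inter ?_ (MeasurableSet.inter ?_ ?_) <;>
    refine MeasurableSet.iInter fun m => ?_
  · exact MeasurableSet.iInter fun l => MeasurableSet.iInter fun _ =>
      measurableSet_le (measurable_pi_apply l) (measurable_pi_apply m)
  · exact measurableSet_le measurable_const (measurable_pi_apply m)
  · exact measurableSet_le (measurable_pi_apply m) measurable_const

noncomputable def Lmap (p : ℕ) : (Fin p → ℝ) →ₗ[ℝ] (Fin p → ℝ) where
  toFun c m := ∑ k ∈ univ.filter (fun k : Fin p => (m : ℕ) ≤ (k : ℕ)), c k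
  map_add' c c' := by ext m; simp [Finset.sum_add_distrib]
  map_smul' r c := by ext m; simp [Finset.mul_sum]

lemma Lmap_det (p : ℕ) : LinearMap.det (Lmap p) = 1 := by
  classical
  rw [← LinearMap.det_toMatrix']
  have hM : ∀ i j : Fin p, LinearMap.toMatrix' (Lmap p) i j
      = if (i : ℕ) ≤ (j : ℕ) then (1:ℝ) else 0 := by
    intro i j
    rw [LinearMap.toMatrix'_apply]
    show (∑ k ∈ univ.filter (fun k : Fin p => (i : ℕ) ≤ (k : ℕ)),
      (Pi.single j (1:ℝ) k)) = _
    simp only [Pi.single_apply]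
    rw [Finset.sum_ite_eq' _ j]
    simp
  have ht : (LinearMap.toMatrix' (Lmap p)).BlockTriangular id := by
    intro i j hij
    rw [hM]
    have : (j : ℕ) < (i : ℕ) := hij
    exact if_neg (by omega)
  rw [Matrix.det_of_upperTriangular ht]
  simp [hM]

lemma Lmap_vol (p : ℕ) : Measure.map (Lmap p) volume = volume := by
  rw [Real.map_linearMap_volume_pi_eq_smul_volume_pi (by rw [Lmap_det]; norm_num)]
  simp [Lmap_det]

lemma filter_nat_insert {p : ℕ} (nn : ℕ) (h : nn < p) :
    univ.filter (fun k : Fin p => nn ≤ (k : ℕ)) =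
      insert ⟨nn, h⟩ (univ.filter fun k : Fin p => nn + 1 ≤ (k : ℕ)) := by
  ext kk
  simp only [mem_filter, mem_univ, true_and, mem_insert, Fin.ext_iff]
  omega

lemma S_succ {p : ℕ} (c : Fin p → ℝ) (nn : ℕ) (h : nn < p) :
    ∑ k ∈ univ.filter (fun k : Fin p => nn ≤ (k : ℕ)), c k
      = c ⟨nn, h⟩ + ∑ k ∈ univ.filter (fun k : Fin p => nn + 1 ≤ (k : ℕ)), c k := by
  rw [filter_nat_insert nn h, Finset.sum_insert (by simp)]

lemma S_empty {p : ℕ} (c : Fin p → ℝ) (nn : ℕ) (h : p ≤ nn) :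
    ∑ k ∈ univ.filter (fun k : Fin p => nn ≤ (k : ℕ)), c k = 0 := by
  rw [Finset.filter_false_of_mem fun k _ => by have := k.isLt; omega, Finset.sum_empty]

lemma Lmap_apply {p : ℕ} (c : Fin p → ℝ) (m : Fin p) :
    Lmap p c m = ∑ k ∈ univ.filter (fun k : Fin p => (m : ℕ) ≤ (k : ℕ)), c k := rfl

lemma Lmap_preimage (p : ℕ) :
    (Lmap p) ⁻¹' (Tset p) = {c : Fin p → ℝ | (∀ k, 0 ≤ c k) ∧ ∑ k, c k ≤ 1} := by
  ext c
  constructor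
  · rintro ⟨h1, h2⟩
    constructor
    · rintro ⟨nn, hn⟩
      have e1 : Lmap p c ⟨nn, hn⟩
          = c ⟨nn, hn⟩ + ∑ k ∈ univ.filter (fun k : Fin p => nn + 1 ≤ (k : ℕ)), c k := by
        rw [Lmap_apply]; exact S_succ c nn hn
      by_cases hp : nn + 1 < p
      · have h3 := h1 ⟨nn, hn⟩ ⟨nn + 1, hp⟩ (by simp [Fin.le_def])
        have e2 : Lmap p c ⟨nn + 1, hp⟩
            = ∑ k ∈ univ.filter (fun k : Fin p => nn + 1 ≤ (k : ℕ)), c k := Lmap_apply c _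
        linarith
      · have e2 : ∑ k ∈ univ.filter (fun k : Fin p => nn + 1 ≤ (k : ℕ)), c k = 0 :=
          S_empty c _ (by omega)
        have h3 := (h2 ⟨nn, hn⟩).1
        linarith
    · rcases Nat.eq_zero_or_pos p with hp | hp
      · subst hp; simp
      · have e1 : ∑ k, c k = Lmap p c ⟨0, hp⟩ := by
          rw [Lmap_apply, Finset.filter_true_of_mem fun k _ => Nat.zero_le _]
        rw [e1]; exact (h2 ⟨0, hp⟩).2
  · rintro ⟨h1, h2⟩
    refine ⟨?_, ?_⟩
    · intro m l hml
      rw [Lmap_apply, Lmap_apply]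
      refine Finset.sum_le_sum_of_subset_of_nonneg ?_ fun k _ _ => h1 k
      intro k hk
      simp only [mem_filter, mem_univ, true_and] at hk ⊢
      have : (m : ℕ) ≤ (l : ℕ) := hml
      omega
    · intro m
      rw [Lmap_apply]
      refine ⟨Finset.sum_nonneg fun k _ => h1 k, ?_⟩
      calc ∑ k ∈ univ.filter (fun k : Fin p => (m : ℕ) ≤ (k : ℕ)), c k ≤ ∑ k, c k := by
            refine Finset.sum_le_sum_of_subset_of_nonneg (Finset.filter_subset _ _)
              fun k _ _ => h1 k
        _ ≤ 1 := h2

lemma Dmeas_eq {I : Type*} {d : ℕ} (α : I → Fin d → ℝ) {p : ℕ} (i : Fin p → I) :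
    Dmeas α i = Measure.map (ff fun m => α (i m)) (volume.restrict (Tset p)) := by
  have hcons : Measurable (fun c : Fin p → ℝ => (Fin.cons (1 - ∑ k, c k) c : Fin (p+1) → ℝ)) := by
    refine measurable_pi_lambda _ (fun kk => ?_)
    refine Fin.cases ?_ ?_ kk
    · simp only [Fin.cons_zero]
      exact measurable_const.sub (Finset.measurable_sum univ fun k _ => measurable_pi_apply k)
    · intro k
      simp only [Fin.cons_succ]
      exact measurable_pi_apply k
  have hπ : Measurable (fun c : Fin (p+1) → ℝ => -∑ kk : Fin (p+1), c kk • beta α i kk) :=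
    ff_meas (beta α i)
  have hLm : Measurable (Lmap p) := (Lmap p).continuous_of_finiteDimensional.measurable
  unfold Dmeas simplexMeasure
  rw [Measure.map_map hπ hcons]
  have hcomp : ((fun c : Fin (p+1) → ℝ => -∑ kk, c kk • beta α i kk)
      ∘ (fun c : Fin p → ℝ => (Fin.cons (1 - ∑ k, c k) c : Fin (p+1) → ℝ)))
      = (ff fun m => α (i m)) ∘ (Lmap p) := by
    funext c
    simp only [Function.comp_apply, ff]
    rw [Fin.sum_univ_succ]
    simp only [Fin.cons_zero, Fin.cons_succ]
    have hb0 : beta α i 0 = 0 := by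
      unfold beta
      rw [Finset.filter_false_of_mem fun jj _ => by simp, Finset.sum_empty]
    rw [hb0, smul_zero, zero_add]
    congr 1
    unfold beta
    calc ∑ k : Fin p, c k • ∑ jj ∈ univ.filter
            (fun jj : Fin p => (jj : ℕ) < ((k.succ : Fin (p+1)) : ℕ)), α (i jj)
        = ∑ k : Fin p, ∑ jj ∈ univ.filter (fun jj : Fin p => (jj : ℕ) < (k : ℕ) + 1),
            c k • α (i jj) := by
          refine Finset.sum_congr rfl fun k _ => ?_
          rw [Finset.smul_sum]
          exact Finset.sum_congr (Finset.filter_congr fun jj _ => by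
            simp [Fin.val_succ, Nat.lt_succ_iff]) fun _ _ => rfl
      _ = ∑ jj : Fin p, ∑ k ∈ univ.filter (fun k : Fin p => (jj : ℕ) ≤ (k : ℕ)),
            c k • α (i jj) := by
          refine Finset.sum_comm' ?_
          intro x y
          simp only [mem_univ, true_and, mem_filter, and_true]
          omega
      _ = ∑ jj : Fin p, (Lmap p c) jj • α (i jj) := by
          refine Finset.sum_congr rfl fun jj _ => ?_
          rw [← Finset.sum_smul, Lmap_apply]
  rw [hcomp, ← Measure.map_map (ff_meas _) hLm]
  congr 1
  have h := Measure.restrict_map (μ := (volume : Measure (Fin p → ℝ))) hLm (Tset_meas p)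
  rw [Lmap_vol, Lmap_preimage] at h
  exact h.symm

/-! ### Null sets and sorting -/

def Nset (n : ℕ) : Set (Fin n → ℝ) := {u | ∃ l l' : Fin n, l ≠ l' ∧ u l = u l'}

lemma Nset_null (n : ℕ) : volume (Nset n) = 0 := by
  have hsub : Nset n ⊆ ⋃ (l : Fin n) (l' : Fin n) (_ : l ≠ l'), {u : Fin n → ℝ | u l = u l'} := by
    rintro u ⟨l, l', h, he⟩
    exact Set.mem_iUnion.2 ⟨l, Set.mem_iUnion.2 ⟨l', Set.mem_iUnion.2 ⟨h, he⟩⟩⟩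
  refine measure_mono_null hsub ?_
  refine measure_iUnion_null fun l => measure_iUnion_null fun l' => measure_iUnion_null fun h => ?_
  have hset : {u : Fin n → ℝ | u l = u l'} =
      (LinearMap.ker ((LinearMap.proj l : (Fin n → ℝ) →ₗ[ℝ] ℝ) - LinearMap.proj l')
        : Set (Fin n → ℝ)) := by
    ext u
    simp [LinearMap.mem_ker, sub_eq_zero, eq_comm]
  rw [hset]
  refine Measure.addHaar_submodule _ _ ?_
  intro htop
  have h1 : (Pi.single l (1:ℝ)) ∈ LinearMap.ker
      ((LinearMap.proj l : (Fin n → ℝ) →ₗ[ℝ] ℝ) - LinearMap.proj l') := by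
    rw [htop]; trivial
  rw [LinearMap.mem_ker, LinearMap.sub_apply, LinearMap.proj_apply, LinearMap.proj_apply,
    Pi.single_eq_same, Pi.single_eq_of_ne (Ne.symm h)] at h1
  norm_num at h1

lemma injective_of_not_Nset {n : ℕ} {u : Fin n → ℝ} (h : u ∉ Nset n) :
    Function.Injective u := by
  intro x y hxy
  by_contra hne
  exact h ⟨x, y, hne, hxy⟩

lemma perm_eq_of_strictAnti {n : ℕ} {u : Fin n → ℝ} (hu : Function.Injective u)
    {σ τ : Equiv.Perm (Fin n)} (hσ : StrictAnti (u ∘ ⇑σ⁻¹)) (hτ : StrictAnti (u ∘ ⇑τ⁻¹)) :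
    σ = τ := by
  have hr : Set.range (u ∘ ⇑σ⁻¹) = Set.range (u ∘ ⇑τ⁻¹) := by
    rw [Function.Surjective.range_comp (σ⁻¹).surjective,
      Function.Surjective.range_comp (τ⁻¹).surjective]
  have hf : (u ∘ ⇑σ⁻¹) = (u ∘ ⇑τ⁻¹) := (StrictAnti.range_inj hσ hτ).1 hr
  have h2 : ⇑σ⁻¹ = ⇑τ⁻¹ := funext fun l => hu (congrFun hf l)
  exact inv_injective (Equiv.coe_fn_injective h2)

lemma exists_sort_perm {n : ℕ} {u : Fin n → ℝ} (hu : Function.Injective u) :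
    ∃ ρ : Equiv.Perm (Fin n), StrictAnti (u ∘ ρ) := by
  classical
  set g : Fin n → ℝ := fun m => -u m with hg
  refine ⟨Tuple.sort g, ?_⟩
  have hmono : Monotone (g ∘ Tuple.sort g) := Tuple.monotone_sort g
  have hginj : Function.Injective g := fun x y hxy => hu (by simpa [hg, neg_inj] using hxy)
  have hsm : StrictMono (g ∘ Tuple.sort g) :=
    hmono.strictMono_of_injective (hginj.comp (Tuple.sort g).injective)
  intro a b hab
  have := hsm hab
  simp only [Function.comp_apply, hg, neg_lt_neg_iff] at this ⊢
  exact this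

/-! ### The shuffle regions -/

def Bset {n : ℕ} (σ : Equiv.Perm (Fin n)) : Set (Fin n → ℝ) :=
  {u | (∀ l l' : Fin n, l < l' → u (σ⁻¹ l') < u (σ⁻¹ l)) ∧ ∀ m, 0 ≤ u m ∧ u m ≤ 1}

lemma Bset_meas {n : ℕ} (σ : Equiv.Perm (Fin n)) : MeasurableSet (Bset σ) := by
  have : Bset σ = (⋂ (l : Fin n) (l' : Fin n) (_ : l < l'),
      {u : Fin n → ℝ | u (σ⁻¹ l') < u (σ⁻¹ l)}) ∩
      ((⋂ m : Fin n, {u : Fin n → ℝ | 0 ≤ u m}) ∩ ⋂ m : Fin n, {u : Fin n → ℝ | u m ≤ 1}) := by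
    ext u
    simp only [Bset, Set.mem_setOf_eq, Set.mem_inter_iff, Set.mem_iInter]
    exact ⟨fun ⟨h1, h2⟩ => ⟨h1, fun m => (h2 m).1, fun m => (h2 m).2⟩,
      fun ⟨h1, h2, h3⟩ => ⟨h1, fun m => ⟨h2 m, h3 m⟩⟩⟩
  rw [this]
  refine MeasurableSet.inter ?_ (MeasurableSet.inter ?_ ?_)
  · exact MeasurableSet.iInter fun l => MeasurableSet.iInter fun l' =>
      MeasurableSet.iInter fun _ =>
        measurableSet_lt (measurable_pi_apply _) (measurable_pi_apply _)
  · exact MeasurableSet.iInter fun m =>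
      measurableSet_le measurable_const (measurable_pi_apply m)
  · exact MeasurableSet.iInter fun m =>
      measurableSet_le (measurable_pi_apply m) measurable_const

def T'set (n : ℕ) : Set (Fin n → ℝ) :=
  {v | (∀ l l' : Fin n, l < l' → v l' < v l) ∧ ∀ m, 0 ≤ v m ∧ v m ≤ 1}

lemma T'_subset_T (n : ℕ) : T'set n ⊆ Tset n := by
  rintro v ⟨h1, h2⟩
  refine ⟨fun m l h => ?_, h2⟩
  rcases eq_or_lt_of_le h with rfl | h
  · exact le_refl _
  · exact (h1 m l h).le

lemma restrict_T'_eq (n : ℕ) :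
    (volume : Measure (Fin n → ℝ)).restrict (T'set n) = volume.restrict (Tset n) := by
  refine Measure.restrict_congr_set (MeasureTheory.ae_eq_set.2 ⟨?_, ?_⟩)
  · rw [Set.diff_eq_empty.2 (T'_subset_T n)]; exact measure_empty
  · refine measure_mono_null ?_ (Nset_null n)
    rintro v ⟨⟨h1, h2⟩, hnot⟩
    by_contra hN
    exact hnot ⟨fun l l' h => lt_of_le_of_ne (h1 l l' h.le) fun he => hN ⟨l', l, h.ne', he⟩, h2⟩

lemma map_Bset {n d : ℕ} (b : Fin n → Fin d → ℝ) (σ : Equiv.Perm (Fin n)) :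
    Measure.map (ff b) (volume.restrict (Bset σ)) =
      Measure.map (ff fun l => b (σ⁻¹ l)) (volume.restrict (Tset n)) := by
  classical
  set R : (Fin n → ℝ) ≃ᵐ (Fin n → ℝ) :=
    (MeasurableEquiv.piCongrLeft (fun _ : Fin n => ℝ) (σ : Fin n ≃ Fin n)).symm with hRdef
  have hRapp : ∀ v : Fin n → ℝ, R v = fun m => v (σ m) := by
    intro v; rfl
  have hR : MeasurePreserving R volume volume :=
    (volume_measurePreserving_piCongrLeft (fun _ : Fin n => ℝ) (σ : Fin n ≃ Fin n)).symm _
  have hpre : ⇑R ⁻¹' (Bset σ) = T'set n := by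
    ext v
    simp only [Set.mem_preimage, Bset, T'set, Set.mem_setOf_eq, hRapp]
    constructor
    · rintro ⟨h1, h2⟩
      refine ⟨fun l l' h => ?_, fun m => by simpa using h2 (σ⁻¹ m)⟩
      have := h1 l l' h
      simpa using this
    · rintro ⟨h1, h2⟩
      refine ⟨fun l l' h => ?_, fun m => h2 (σ m)⟩
      simpa using h1 l l' h
  have step1 : volume.restrict (Bset σ) = Measure.map R (volume.restrict (T'set n)) := by
    rw [← hpre, ← Measure.restrict_map R.measurable (Bset_meas σ), hR.map_eq]
  rw [step1, Measure.map_map (ff_meas b) R.measurable]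
  have hfun : (ff b ∘ ⇑R) = ff fun l => b (σ⁻¹ l) := by
    funext v
    simp only [Function.comp_apply, hRapp, ff]
    congr 1
    have := Equiv.sum_comp (σ : Fin n ≃ Fin n) (fun l => v l • b (σ⁻¹ l))
    rw [← this]
    refine Finset.sum_congr rfl fun m _ => ?_
    simp
  rw [hfun, restrict_T'_eq]

/-! ### The blocks region -/

def Uset (p q : ℕ) : Set (Fin (p + q) → ℝ) :=
  {u | (fun m : Fin p => u (Fin.castAdd q m)) ∈ Tset p ∧
       (fun m : Fin q => u (Fin.natAdd p m)) ∈ Tset q}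

lemma Uset_meas (p q : ℕ) : MeasurableSet (Uset p q) := by
  have h1 : Measurable (fun (u : Fin (p+q) → ℝ) => fun (m : Fin p) => u (Fin.castAdd q m)) :=
    measurable_pi_lambda _ fun m => measurable_pi_apply _
  have h2 : Measurable (fun (u : Fin (p+q) → ℝ) => fun (m : Fin q) => u (Fin.natAdd p m)) :=
    measurable_pi_lambda _ fun m => measurable_pi_apply _
  exact (h1 (Tset_meas p)).inter (h2 (Tset_meas q))

lemma Bset_subset_Uset {p q : ℕ} {σ : Equiv.Perm (Fin (p+q))} (hσ : σ ∈ Sh p q) :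
    Bset σ ⊆ Uset p q := by
  rw [Sh, Finset.mem_filter] at hσ
  obtain ⟨-, hσ1, hσ2⟩ := hσ
  rintro u ⟨h1, h2⟩
  constructor
  · refine ⟨fun m l hml => ?_, fun m => h2 _⟩
    rcases eq_or_lt_of_le hml with rfl | hlt
    · exact le_refl _
    · have hcast : Fin.castAdd q m < Fin.castAdd q l := hlt
      have hσlt : σ (Fin.castAdd q m) < σ (Fin.castAdd q l) :=
        hσ1 _ _ hcast (by simpa using l.isLt)
      have := h1 _ _ hσlt
      simpa using this.le
  · refine ⟨fun m l hml => ?_, fun m => h2 _⟩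
    rcases eq_or_lt_of_le hml with rfl | hlt
    · exact le_refl _
    · have hcast : Fin.natAdd p m < Fin.natAdd p l := by
        rw [Fin.lt_def] at hlt ⊢
        simpa using hlt
      have hσlt : σ (Fin.natAdd p m) < σ (Fin.natAdd p l) :=
        hσ2 _ _ hcast (by simp)
      have := h1 _ _ hσlt
      simpa using this.le

lemma cover {p q : ℕ} {u : Fin (p+q) → ℝ} (hU : u ∈ Uset p q) (hN : u ∉ Nset (p+q)) :
    ∃ σ ∈ Sh p q, u ∈ Bset σ := by
  have hinj := injective_of_not_Nset hN
  obtain ⟨ρ, hρ⟩ := exists_sort_perm hinj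
  refine ⟨ρ⁻¹, ?_, ?_⟩
  · -- membership in Sh
    rw [Sh, Finset.mem_filter]
    have key : ∀ i jj : Fin (p+q), i ≠ jj → u jj < u i → ρ⁻¹ i < ρ⁻¹ jj := by
      intro i jj hne hlt
      rcases lt_trichotomy (ρ⁻¹ i) (ρ⁻¹ jj) with h | h | h
      · exact h
      · exact absurd ((ρ⁻¹).injective h) hne
      · have h3 := hρ h
        simp only [Function.comp_apply, Equiv.Perm.inv_def, Equiv.apply_symm_apply] at h3
        exact absurd h3 (by linarith)
    refine ⟨Finset.mem_univ _, fun i jj hij hjp => ?_, fun i jj hij hpi => ?_⟩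
    · have hult : u jj < u i := by
        have hle := hU.1.1 ⟨(i : ℕ), by omega⟩ ⟨(jj : ℕ), hjp⟩ (by
          rw [Fin.mk_le_mk]; exact hij.le)
        have e1 : Fin.castAdd q (⟨(i : ℕ), by omega⟩ : Fin p) = i := by
          apply Fin.ext; simp
        have e2 : Fin.castAdd q (⟨(jj : ℕ), hjp⟩ : Fin p) = jj := by
          apply Fin.ext; simp
        dsimp only at hle
        rw [e1, e2] at hle
        exact lt_of_le_of_ne hle fun he => hij.ne' (hinj he)
      exact key i jj hij.ne hult
    · have hult : u jj < u i := by
        have hle := hU.2.1 ⟨(i : ℕ) - p, by omega⟩ ⟨(jj : ℕ) - p, by omega⟩ (by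
          rw [Fin.mk_le_mk]; omega)
        have e1 : Fin.natAdd p (⟨(i : ℕ) - p, by omega⟩ : Fin q) = i := by
          apply Fin.ext; simp; omega
        have e2 : Fin.natAdd p (⟨(jj : ℕ) - p, by omega⟩ : Fin q) = jj := by
          apply Fin.ext; simp; omega
        dsimp only at hle
        rw [e1, e2] at hle
        exact lt_of_le_of_ne hle fun he => hij.ne' (hinj he)
      exact key i jj hij.ne hult
  · -- membership in Bset
    constructor
    · intro l l' hll'
      have : (ρ⁻¹ : Equiv.Perm (Fin (p+q)))⁻¹ = ρ := inv_inv ρ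
      rw [this]
      exact hρ hll'
    · intro m
      refine Fin.addCases (fun m₁ => ?_) (fun m₁ => ?_) m
      · exact hU.1.2 m₁
      · exact hU.2.2 m₁

lemma Bset_disjoint {n : ℕ} {σ τ : Equiv.Perm (Fin n)} (hne : σ ≠ τ) :
    Disjoint (Bset σ) (Bset τ) := by
  rw [Set.disjoint_left]
  rintro u ⟨hσ1, hσ2⟩ ⟨hτ1, hτ2⟩
  have hσa : StrictAnti (u ∘ ⇑σ⁻¹) := fun l l' h => hσ1 l l' h
  have hτa : StrictAnti (u ∘ ⇑τ⁻¹) := fun l l' h => hτ1 l l' h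
  have hinj : Function.Injective u := by
    intro x y hxy
    have : (u ∘ ⇑σ⁻¹) (σ x) = (u ∘ ⇑σ⁻¹) (σ y) := by
      simp only [Function.comp_apply, Equiv.Perm.inv_def, Equiv.symm_apply_apply]; exact hxy
    have := hσa.injective this
    exact σ.injective this
  exact hne (perm_eq_of_strictAnti hinj hσa hτa)

/-! ### The core identity -/

lemma core {p q d : ℕ} (b : Fin (p+q) → Fin d → ℝ) :
    Measure.map (ff b) (volume.restrict (Uset p q)) =
      ∑ σ ∈ Sh p q, Measure.map (ff fun m => b (σ⁻¹ m)) (volume.restrict (Tset (p+q))) := by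
  classical
  have hae : Uset p q =ᵐ[volume]
      ⋃ σ : ↥(Sh p q), Bset (σ : Equiv.Perm (Fin (p+q))) := by
    rw [MeasureTheory.ae_eq_set]
    constructor
    · refine measure_mono_null ?_ (Nset_null (p+q))
      intro u hu
      by_contra hN
      obtain ⟨σ, hσSh, hmem⟩ := cover hu.1 hN
      exact hu.2 (Set.mem_iUnion.2 ⟨⟨σ, hσSh⟩, hmem⟩)
    · have hsub : (⋃ σ : ↥(Sh p q), Bset (σ : Equiv.Perm (Fin (p+q)))) ⊆ Uset p q :=
        Set.iUnion_subset fun σ => Bset_subset_Uset σ.2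
      rw [Set.diff_eq_empty.2 hsub]
      exact measure_empty
  have hdisj : Pairwise (Function.onFun Disjoint
      fun σ : ↥(Sh p q) => Bset (σ : Equiv.Perm (Fin (p+q)))) := by
    intro σ τ hne
    exact Bset_disjoint fun h => hne (Subtype.ext h)
  rw [Measure.restrict_congr_set hae,
    Measure.restrict_iUnion hdisj fun σ => Bset_meas _,
    Measure.map_sum (ff_meas b).aemeasurable]
  have heq : (fun σ : ↥(Sh p q) =>
      Measure.map (ff b) (volume.restrict (Bset (σ : Equiv.Perm (Fin (p+q))))))
      = fun σ : ↥(Sh p q) => Measure.map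
          (ff fun m => b ((σ : Equiv.Perm (Fin (p+q)))⁻¹ m)) (volume.restrict (Tset (p+q))) := by
    funext σ
    exact map_Bset b _
  rw [heq]
  exact Measure.sum_coe_finset (Sh p q)
    (fun τ => Measure.map (ff fun m => b (τ⁻¹ m)) (volume.restrict (Tset (p+q))))

/-! ### The product splitting -/

noncomputable def Phi (p q : ℕ) : (Fin (p+q) → ℝ) ≃ᵐ ((Fin p → ℝ) × (Fin q → ℝ)) :=
  (MeasurableEquiv.piCongrLeft (fun _ : Fin (p+q) => ℝ) finSumFinEquiv).symm.trans
    (MeasurableEquiv.sumPiEquivProdPi fun _ : Fin p ⊕ Fin q => ℝ)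

lemma Phi_mp (p q : ℕ) : MeasurePreserving (Phi p q) volume volume := by
  have h1 : MeasurePreserving
      (MeasurableEquiv.piCongrLeft (fun _ : Fin (p+q) => ℝ) finSumFinEquiv).symm
      volume volume :=
    (volume_measurePreserving_piCongrLeft (fun _ : Fin (p+q) => ℝ) finSumFinEquiv).symm _
  have h2 : MeasurePreserving
      (MeasurableEquiv.sumPiEquivProdPi fun _ : Fin p ⊕ Fin q => ℝ) volume volume := by
    have h := volume_measurePreserving_sumPiEquivProdPi_symm (fun _ : Fin p ⊕ Fin q => ℝ)
    have h' := h.symm (MeasurableEquiv.sumPiEquivProdPi fun _ : Fin p ⊕ Fin q => ℝ).symm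
    simpa using h'
  exact h2.comp h1

lemma Phi_apply (p q : ℕ) (u : Fin (p+q) → ℝ) :
    Phi p q u = (fun m => u (Fin.castAdd q m), fun m => u (Fin.natAdd p m)) := by
  unfold Phi
  ext m
  · rfl
  · rfl

lemma Phi_preimage (p q : ℕ) : ⇑(Phi p q) ⁻¹' ((Tset p) ×ˢ (Tset q)) = Uset p q := by
  ext u
  simp only [Set.mem_preimage, Phi_apply, Set.mem_prod, Uset, Set.mem_setOf_eq]

end SP

open SP in
theorem convolution_shuffle_identity {I : Type*} (d : ℕ) (hd : 1 ≤ d)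
    (α : I → Fin d → ℝ) (p q : ℕ) (j : Fin p → I) (k : Fin q → I) :
    Measure.map (fun y : (Fin d → ℝ) × (Fin d → ℝ) => y.1 + y.2)
        ((Dmeas α j).prod (Dmeas α k)) =
      ∑ σ ∈ Sh p q, Dmeas α (Fin.append j k ∘ ⇑σ⁻¹) := by
  classical
  rw [Dmeas_eq α j, Dmeas_eq α k,
    Measure.map_prod_map _ _ (ff_meas _) (ff_meas _),
    Measure.map_map (g := fun y : (Fin d → ℝ) × (Fin d → ℝ) => y.1 + y.2)
      (measurable_fst.add measurable_snd)
      ((ff_meas _).prodMap (ff_meas _)),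
    Measure.prod_restrict, ← Measure.volume_eq_prod,
    ← (Phi_mp p q).map_eq,
    Measure.restrict_map (Phi p q).measurable ((Tset_meas p).prod (Tset_meas q)),
    Measure.map_map (g := (fun y : (Fin d → ℝ) × (Fin d → ℝ) => y.1 + y.2) ∘
      Prod.map (ff fun m => α (j m)) (ff fun m => α (k m))) ((measurable_fst.add measurable_snd).comp
      ((ff_meas _).prodMap (ff_meas _))) (Phi p q).measurable,
    Phi_preimage]
  have hfun : (((fun y : (Fin d → ℝ) × (Fin d → ℝ) => y.1 + y.2)
      ∘ Prod.map (ff fun m => α (j m)) (ff fun m => α (k m))) ∘ ⇑(Phi p q))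
      = ff (fun m => α (Fin.append j k m)) := by
    funext u
    simp only [Function.comp_apply, Phi_apply, Prod.map_apply, ff]
    rw [Fin.sum_univ_add (f := fun m : Fin (p+q) => u m • α (Fin.append j k m))]
    simp only [Fin.append_left, Fin.append_right, neg_add]
    try exact add_comm _ _
  rw [hfun, core (fun m => α (Fin.append j k m))]
  refine Finset.sum_congr rfl fun σ hσ => ?_
  rw [Dmeas_eq α (Fin.append j k ∘ ⇑σ⁻¹)]
  rfl
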